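/- Let U ⊆ ℂ³⊗ℂ³ ≅ Mat₃(ℂ) be the 3-dimensional space of matrices {[[u,t,s],[t,s,0],[s,0,0]] : s,t,u ∈ ℂ}. Then the rank of U, i.e., the smallest r such that U is contained in an r-dimensional subspace of Mat₃(ℂ) spanned by rank-one matrices, equals 5. -/

import Mathlib

open Matrix Finset

private lemma hankel_rank_add_le' (A B : Matrix (Fin 3) (Fin 3) ℂ) :
    (A + B).rank ≤ A.rank + B.rank := by
  rw [Matrix.rank, Matrix.rank, Matrix.rank, Matrix.mulVecLin_add]
  have h : LinearMap.range (A.mulVecLin + B.mulVecLin) ≤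
      LinearMap.range A.mulVecLin ⊔ LinearMap.range B.mulVecLin := by
    rintro x ⟨y, rfl⟩; exact Submodule.add_mem_sup ⟨y, rfl⟩ ⟨y, rfl⟩
  exact (Submodule.finrank_mono h).trans (Submodule.finrank_add_le_finrank_add_finrank _ _)

private lemma hankel_rank_smul_le' (c : ℂ) (A : Matrix (Fin 3) (Fin 3) ℂ) :
    (c • A).rank ≤ A.rank := by
  have : c • A = (c • (1 : Matrix (Fin 3) (Fin 3) ℂ)) * A := by rw [smul_mul_assoc, one_mul]
  rw [this]; exact Matrix.rank_mul_le_right _ _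

private lemma hankel_rank_sum_le' {r : ℕ} (M : Fin r → Matrix (Fin 3) (Fin 3) ℂ)
    (hM : ∀ i, (M i).rank = 1) (c : Fin r → ℂ) (s : Finset (Fin r)) :
    (∑ k ∈ s, c k • M k).rank ≤ s.card := by
  induction s using Finset.induction with
  | empty => simp [Matrix.rank_zero]
  | insert a s' h ih =>
    rw [Finset.sum_insert h, Finset.card_insert_of_notMem h]
    exact (hankel_rank_add_le' _ _).trans (by
      have h1 : (c a • M a).rank ≤ 1 := (hankel_rank_smul_le' _ _).trans (le_of_eq (hM a))
      omega)

private lemma hankel_rank_vecMulVec (v : Fin 3 → ℂ) (h0 : v 0 = 1) :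
    (vecMulVec v v).rank = 1 := by
  refine le_antisymm ?_ ?_
  · rw [vecMulVec_eq (Fin 1)]
    exact (Matrix.rank_mul_le_right _ _).trans ((Matrix.rank_le_card_height _).trans (by simp))
  · by_contra h
    push_neg at h
    interval_cases hh : (vecMulVec v v).rank
    rw [Matrix.rank] at hh
    have hv : v ∈ LinearMap.range (vecMulVec v v).mulVecLin := by
      refine ⟨Pi.single 0 1, ?_⟩
      ext i
      simp [mulVecLin_apply, mulVec, dotProduct, vecMulVec_apply, Pi.single_apply, h0]
    rw [Submodule.finrank_eq_zero.mp hh] at hv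
    simp only [Submodule.mem_bot] at hv
    rw [hv] at h0
    simp at h0

/-- The rank of the 3-dimensional space of matrices `{[[u,t,s],[t,s,0],[s,0,0]]}`, i.e. the
smallest `r` such that it is contained in the span of `r` rank-one matrices, equals 5. -/
theorem space_rank_hankel_eq_five :
    IsLeast {r : ℕ | ∃ M : Fin r → Matrix (Fin 3) (Fin 3) ℂ,
        (∀ i, (M i).rank = 1) ∧
        ∀ s t u : ℂ, (!![u, t, s; t, s, 0; s, 0, 0] : Matrix (Fin 3) (Fin 3) ℂ)
          ∈ Submodule.span ℂ (Set.range M)} 5 := by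
  constructor
  · -- membership: five explicit rank-one (Vandermonde) matrices work
    refine ⟨![vecMulVec ![1,0,0] ![1,0,0], vecMulVec ![1,1,1] ![1,1,1],
        vecMulVec ![1,-1,1] ![1,-1,1], vecMulVec ![1,2,4] ![1,2,4],
        vecMulVec ![1,-2,4] ![1,-2,4]], ?_, ?_⟩
    · intro i
      fin_cases i <;> exact hankel_rank_vecMulVec _ rfl
    · intro s t u
      rw [Submodule.mem_span_range_iff_exists_fun]
      refine ⟨![u - 5/4*s, 2/3*t + 2/3*s, -(2/3)*t + 2/3*s, -(1/12)*t - 1/24*s,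
        1/12*t - 1/24*s], ?_⟩
      simp only [Fin.sum_univ_five]
      ext i j
      fin_cases i <;> fin_cases j <;>
        simp [vecMulVec_apply, Matrix.smul_apply, Matrix.add_apply, vecHead, vecTail] <;> ring
  · -- lower bound
    rintro r ⟨M, hrank, hspan⟩
    by_contra hcon
    push_neg at hcon
    have hr : r < 5 := hcon
    obtain ⟨α, hα⟩ := (Submodule.mem_span_range_iff_exists_fun ℂ).mp (hspan 0 0 1)
    obtain ⟨β, hβ⟩ := (Submodule.mem_span_range_iff_exists_fun ℂ).mp (hspan 0 1 0)
    obtain ⟨γ, hγ⟩ := (Submodule.mem_span_range_iff_exists_fun ℂ).mp (hspan 1 0 0)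
    have key : ∀ i j : Fin r, i ≠ j → α i * β j = α j * β i := by
      intro i j hij
      by_contra hd
      have hd' : α i * β j - α j * β i ≠ 0 := sub_ne_zero.mpr hd
      set d : ℂ := α i * β j - α j * β i with hddef
      set L : ℂ := (-(γ i) * β j + γ j * β i) / d with hL
      set P : ℂ := (-(α i) * γ j + α j * γ i) / d with hP
      set c : Fin r → ℂ := fun k => L * α k + P * β k + γ k with hc
      have hci : c i = 0 := by
        simp only [hc, hL, hP]; field_simp; ring
      have hcj : c j = 0 := by
        simp only [hc, hL, hP]; field_simp; ring
      have hNsum : (!![L, P, 1; P, 1, 0; 1, 0, 0] : Matrix (Fin 3) (Fin 3) ℂ)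
          = ∑ k, c k • M k := by
        have : (!![L, P, 1; P, 1, 0; 1, 0, 0] : Matrix (Fin 3) (Fin 3) ℂ)
            = L • (!![(1:ℂ),0,0;0,0,0;0,0,0]) + P • (!![(0:ℂ),1,0;1,0,0;0,0,0])
              + (!![(0:ℂ),0,1;0,1,0;1,0,0]) := by
          ext i' j'; fin_cases i' <;> fin_cases j' <;> simp [vecHead, vecTail]
        rw [this, ← hα, ← hβ, ← hγ, Finset.smul_sum, Finset.smul_sum,
          ← Finset.sum_add_distrib, ← Finset.sum_add_distrib]
        refine Finset.sum_congr rfl fun k _ => ?_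
        simp only [hc, smul_smul, add_smul]
      have hsub : ∑ k, c k • M k = ∑ k ∈ Finset.univ \ {i, j}, c k • M k := by
        refine (Finset.sum_subset (Finset.subset_univ _) fun x _ hx => ?_).symm
        have : x = i ∨ x = j := or_iff_not_imp_left.mpr (by
          simpa [Finset.mem_sdiff, Finset.mem_insert, Finset.mem_singleton, not_and_or,
            not_not] using hx)
        rcases this with rfl | rfl
        · rw [hci, zero_smul]
        · rw [hcj, zero_smul]
      have hcard : (Finset.univ \ ({i, j} : Finset (Fin r))).card ≤ 2 := by
        have h2 : ({i, j} : Finset (Fin r)).card = 2 := Finset.card_pair hij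
        have := Finset.card_sdiff_of_subset (Finset.subset_univ ({i, j} : Finset (Fin r)))
        rw [this, h2, Finset.card_univ, Fintype.card_fin]
        omega
      have hrankle : (!![L, P, 1; P, 1, 0; 1, 0, 0] : Matrix (Fin 3) (Fin 3) ℂ).rank ≤ 2 := by
        rw [hNsum, hsub]
        exact (hankel_rank_sum_le' M hrank c _).trans hcard
      have hdet : (!![L, P, 1; P, 1, 0; 1, 0, 0] : Matrix (Fin 3) (Fin 3) ℂ).det = -1 := by
        simp [Matrix.det_fin_three, vecHead, vecTail]
      have hunit : IsUnit (!![L, P, 1; P, 1, 0; 1, 0, 0] : Matrix (Fin 3) (Fin 3) ℂ) := by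
        rw [Matrix.isUnit_iff_isUnit_det, hdet, isUnit_iff_ne_zero]
        norm_num
      have := Matrix.rank_of_isUnit _ hunit
      rw [this] at hrankle
      simp [Fintype.card_fin] at hrankle
    have hex : ∃ i, α i ≠ 0 := by
      by_contra hall
      push_neg at hall
      have : (!![(1:ℂ),0,0;0,0,0;0,0,0] : Matrix (Fin 3) (Fin 3) ℂ) = 0 := by
        rw [← hα]
        exact Finset.sum_eq_zero fun k _ => by rw [hall k, zero_smul]
      have := congrFun (congrFun this 0) 0
      simp at this
    obtain ⟨i0, hi0⟩ := hex
    have hprop : ∀ k, β k = β i0 / α i0 * α k := by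
      intro k
      by_cases hk : k = i0
      · subst hk; field_simp
      · have h2 := key i0 k (Ne.symm hk)
        field_simp
        linear_combination h2
    have : (!![(0:ℂ),1,0;1,0,0;0,0,0] : Matrix (Fin 3) (Fin 3) ℂ)
        = (β i0 / α i0) • (!![(1:ℂ),0,0;0,0,0;0,0,0]) := by
      rw [← hα, ← hβ, Finset.smul_sum]
      refine Finset.sum_congr rfl fun k _ => ?_
      rw [smul_smul, ← hprop k]
    have h01 := congrFun (congrFun this 0) 1
    simp at h01
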